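/- Let U ⊆ ℂ be a bounded connected open set, and let W_n, W ⊆ U be connected open sets with 0 ∈ W_n for all n and 0 ∈ W. Assume (W_n) converges to W in the kernel sense, the set F associated to (W_n) and W is empty, and the function p ↦ η_W(p) is continuous on W. Then η_{W_n} → η_W uniformly on every compact subset of W. (This is Theorem 1.6 of the paper for the trivial single-leaf nonsingular foliation of U, for which the singular set E and the defective set S are empty; bounded plane domains are automatically taut.) -/

import Mathlib

open Filter Metric Topology Set

/-- The kernel of a sequence of open sets: the union over `n` of the connected
component containing `0` of the interior of `⋂ k ≥ n, W k`. -/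
def seqKernel {X : Type*} [TopologicalSpace X] [Zero X] (W : ℕ → Set X) : Set X :=
  ⋃ n, connectedComponentIn (interior (⋂ k, ⋂ (_ : n ≤ k), W k)) 0

/-- The set `F` associated to a sequence `(W n)` and a limit set `W₀`: points
outside `closure W₀` that are limits of points `p k ∈ W (n k) \ closure W₀`
along a strictly increasing sequence of indices. -/
def Fset {X : Type*} [TopologicalSpace X] (W : ℕ → Set X) (W₀ : Set X) : Set X :=
  {p | p ∉ closure W₀ ∧ ∃ nk : ℕ → ℕ, StrictMono nk ∧ ∃ pk : ℕ → X,
    (∀ k, pk k ∈ W (nk k) \ closure W₀) ∧ Tendsto pk atTop (nhds p)}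

/-- The modulus-of-uniformization function of a plane domain `Ω` (for the trivial
single-leaf foliation): the supremum of `|f'(0)|` over holomorphic maps
`f : 𝔻 → Ω` with `f 0 = p` (with `sSup ∅ = 0`). -/
noncomputable def eta (Ω : Set ℂ) (p : ℂ) : ℝ :=
  sSup {r : ℝ | ∃ f : ℂ → ℂ, DifferentiableOn ℂ f (ball (0 : ℂ) 1) ∧ f 0 = p ∧
    (∀ z ∈ ball (0 : ℂ) 1, f z ∈ Ω) ∧ r = ‖deriv f 0‖}


/-- The set of competing derivative values in the definition of `eta`. -/
def etaSet (Ω : Set ℂ) (p : ℂ) : Set ℝ :=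
  {r : ℝ | ∃ f : ℂ → ℂ, DifferentiableOn ℂ f (ball (0 : ℂ) 1) ∧ f 0 = p ∧
    (∀ z ∈ ball (0 : ℂ) 1, f z ∈ Ω) ∧ r = ‖deriv f 0‖}

noncomputable def eta' (Ω : Set ℂ) (p : ℂ) : ℝ := sSup (etaSet Ω p)

lemma eta'_eq_eta : eta' = eta := rfl

/-- The connected component of `0` in the interior of the eventual intersection. -/
def kerV (W : ℕ → Set ℂ) (n : ℕ) : Set ℂ :=
  connectedComponentIn (interior (⋂ k, ⋂ (_ : n ≤ k), W k)) 0


lemma zero_mem_etaSet {Ω : Set ℂ} {p : ℂ} (hp : p ∈ Ω) : (0:ℝ) ∈ etaSet Ω p := by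
  refine ⟨fun _ => p, differentiableOn_const _, rfl, fun z _ => hp, ?_⟩
  simp [deriv_const]

lemma etaSet_nonneg {Ω : Set ℂ} {p : ℂ} : ∀ r ∈ etaSet Ω p, (0:ℝ) ≤ r := by
  rintro r ⟨f, _, _, _, rfl⟩; positivity

lemma eta'_nonneg (Ω : Set ℂ) (p : ℂ) : 0 ≤ eta' Ω p :=
  Real.sSup_nonneg etaSet_nonneg

lemma etaSet_bddAbove {Ω : Set ℂ} {M : ℝ} (hΩ : Ω ⊆ ball (0:ℂ) M) (p : ℂ) :
    BddAbove (etaSet Ω p) := by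
  refine ⟨2 * M, ?_⟩
  rintro r ⟨f, hd, hf0, hmaps, rfl⟩
  have hmt : MapsTo f (ball (0:ℂ) 1) (ball (f 0) (2 * M)) := by
    intro z hz
    have h1 : f z ∈ ball (0:ℂ) M := hΩ (hmaps z hz)
    have h2 : f 0 ∈ ball (0:ℂ) M := hΩ (hmaps 0 (by simp))
    rw [mem_ball] at h1 h2 ⊢
    calc dist (f z) (f 0) ≤ dist (f z) 0 + dist 0 (f 0) := dist_triangle _ _ _
    _ < M + M := by rw [dist_comm (0:ℂ) (f 0)]; exact add_lt_add h1 h2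
    _ = 2 * M := by ring
  have := Complex.norm_deriv_le_div_of_mapsTo_ball hd (hmt.mono_right ball_subset_closedBall) one_pos
  simpa using this

lemma le_eta' {Ω : Set ℂ} {M : ℝ} (hΩ : Ω ⊆ ball (0:ℂ) M) {p r : ℂ → ℂ → Prop} : True := trivial

lemma le_eta'' {Ω : Set ℂ} {M : ℝ} (hΩ : Ω ⊆ ball (0:ℂ) M) {p : ℂ} {r : ℝ}
    (hr : r ∈ etaSet Ω p) : r ≤ eta' Ω p :=
  le_csSup (etaSet_bddAbove hΩ p) hr

lemma exists_admissible {Ω : Set ℂ} {p : ℂ} (hp : p ∈ Ω) {ε : ℝ} (hε : 0 < ε) :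
    ∃ r ∈ etaSet Ω p, eta' Ω p - ε < r :=
  exists_lt_of_lt_csSup ⟨0, zero_mem_etaSet hp⟩ (sub_lt_self _ hε)

lemma kerV_mono (W : ℕ → Set ℂ) :
    Monotone (kerV W) := by
  intro n m hnm
  refine connectedComponentIn_mono _ (interior_mono ?_)
  exact fun x hx => mem_iInter₂.2 fun k hk => mem_iInter₂.1 hx k (hnm.trans hk)

lemma kerV_isOpen {W : ℕ → Set ℂ}
    (hW : ∀ n, IsOpen (W n)) (n : ℕ) : IsOpen (kerV W n) :=
  isOpen_interior.connectedComponentIn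

lemma kerV_subset (W : ℕ → Set ℂ) {n k : ℕ}
    (hnk : n ≤ k) : kerV W n ⊆ W k := fun x hx =>
  mem_iInter₂.1 (interior_subset (connectedComponentIn_subset _ _ hx)) k hnk

lemma kerV_isPreconnected (W : ℕ → Set ℂ) (n : ℕ) :
    IsPreconnected (kerV W n) := isPreconnected_connectedComponentIn

/-- A compact subset of the kernel is contained in some `kerV W N`. -/
lemma IsCompact.subset_kerV {W : ℕ → Set ℂ}
    (hW : ∀ n, IsOpen (W n)) {C : Set ℂ} (hC : IsCompact C) (hCk : C ⊆ seqKernel W) :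
    ∃ N, C ⊆ kerV W N := by
  exact hC.elim_directed_cover _ (kerV_isOpen hW) hCk ((kerV_mono W).directed_le)

lemma eta_lower_bound
    {U : Set ℂ} {M : ℝ} (hUM : U ⊆ ball (0:ℂ) M)
    {W : ℕ → Set ℂ} {W₀ : Set ℂ}
    (hWopen : ∀ n, IsOpen (W n)) (hW₀open : IsOpen W₀)
    (hWU : ∀ n, W n ⊆ U)
    (hker : seqKernel W = W₀) (hcont : ContinuousOn (eta' W₀) W₀)
    {K : Set ℂ} (hK : IsCompact K) (hKW : K ⊆ W₀) {ε : ℝ} (hε : 0 < ε) :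
    ∀ᶠ n in atTop, ∀ p ∈ K, eta' W₀ p - ε < eta' (W n) p := by
  classical
  -- local statement around each point of K
  have key : ∀ p ∈ K, ∃ ρ > 0, ∃ N : ℕ, ∀ n ≥ N, ∀ q ∈ ball p ρ ∩ W₀,
      eta' W₀ q - ε < eta' (W n) q := by
    intro p hp
    set t := eta' W₀ p with ht
    obtain ⟨r0, ⟨f, hfd, hf0, hfm, hr0⟩, hgt⟩ :=
      exists_admissible (hKW hp) (ε := ε/4) (by linarith)
    set a := ‖deriv f 0‖ with ha
    have ha0 : 0 ≤ a := by positivity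
    rw [hr0] at hgt
    -- choose r < 1 with t - ε/2 < r * a
    obtain ⟨r, hrpos, hrlt, hra⟩ : ∃ r : ℝ, 0 < r ∧ r < 1 ∧ t - ε/2 < r * a := by
      rcases le_or_gt t (ε/4) with h | h
      · exact ⟨1/2, by norm_num, by norm_num, by nlinarith⟩
      · have ha' : 0 < a := by linarith
        refine ⟨max (1/2) ((t - ε/2 + a) / (2*a)), lt_max_of_lt_left (by norm_num), ?_, ?_⟩
        · refine max_lt (by norm_num) ?_
          rw [div_lt_one (by linarith)]
          linarith
        · have h1 : (t - ε/2 + a) / (2*a) * a = (t - ε/2 + a) / 2 := by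
            field_simp
          have h2 : (t - ε/2 + a) / (2*a) * a ≤ max (1/2) ((t - ε/2 + a) / (2*a)) * a :=
            mul_le_mul_of_nonneg_right (le_max_right _ _) ha0
          nlinarith [h2, h1]
    -- the compact set and its thickening
    set C : Set ℂ := f '' closedBall (0:ℂ) r with hC
    have hCb : closedBall (0:ℂ) r ⊆ ball (0:ℂ) 1 := closedBall_subset_ball hrlt
    have hCcomp : IsCompact C :=
      (isCompact_closedBall _ _).image_of_continuousOn (hfd.continuousOn.mono hCb)
    have hCW₀ : C ⊆ W₀ := by
      rintro _ ⟨z, hz, rfl⟩; exact hfm z (hCb hz)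
    obtain ⟨δ, hδpos, hδ⟩ := hCcomp.exists_cthickening_subset_open hW₀open hCW₀
    have hDcomp : IsCompact (cthickening δ C) := hCcomp.cthickening
    obtain ⟨N, hN⟩ := hDcomp.subset_kerV hWopen (by rw [hker]; exact hδ)
    -- continuity radius
    obtain ⟨δ', hδ'pos, hδ'⟩ := Metric.continuousWithinAt_iff.1 (hcont p (hKW hp)) (ε/4)
      (by linarith)
    refine ⟨min δ δ', lt_min hδpos hδ'pos, N, fun n hn q hq => ?_⟩
    obtain ⟨hq1, hq2⟩ := hq
    have hqp : dist q p < δ := (mem_ball.1 hq1).trans_le (min_le_left _ _)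
    have hqp' : dist q p < δ' := (mem_ball.1 hq1).trans_le (min_le_right _ _)
    -- the translated map
    set g : ℂ → ℂ := fun z => f ((r : ℂ) * z) + (q - p) with hg
    have hmul : ∀ z : ℂ, z ∈ ball (0:ℂ) 1 → (r:ℂ) * z ∈ closedBall (0:ℂ) r := by
      intro z hz
      rw [mem_closedBall, dist_zero_right]
      calc ‖(r:ℂ) * z‖ = r * ‖z‖ := by
            rw [norm_mul, Complex.norm_real, Real.norm_of_nonneg hrpos.le]
      _ ≤ r * 1 := by
            have := mem_ball_zero_iff.1 hz
            exact mul_le_mul_of_nonneg_left this.le hrpos.le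
      _ = r := mul_one r
    have hgd : DifferentiableOn ℂ g (ball (0:ℂ) 1) := by
      apply DifferentiableOn.add_const
      exact DifferentiableOn.comp hfd
        ((differentiable_const _).mul differentiable_id).differentiableOn
        (fun z hz => hCb (hmul z hz))
    have hg0 : g 0 = q := by simp [hg, hf0]
    have hgm : ∀ z ∈ ball (0:ℂ) 1, g z ∈ W n := by
      intro z hz
      have h1 : f ((r:ℂ) * z) ∈ C := mem_image_of_mem f (hmul z hz)
      have h2 : g z ∈ cthickening δ C := by
        apply Metric.mem_cthickening_of_dist_le (g z) (f ((r:ℂ)*z)) δ C h1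
        have : dist (g z) (f ((r:ℂ)*z)) = dist q p := by
          rw [hg]; simp [dist_eq_norm]
        rw [this]; exact hqp.le
      exact kerV_subset W hn (hN h2)
    have hgderiv : ‖deriv g 0‖ = r * a := by
      have h1 : HasDerivAt f (deriv f 0) 0 :=
        ((hfd.differentiableAt (isOpen_ball.mem_nhds (by simp))).hasDerivAt)
      have h2 : HasDerivAt (fun z : ℂ => (r:ℂ) * z) (r:ℂ) 0 := by
        simpa using (hasDerivAt_id (0:ℂ)).const_mul (r:ℂ)
      have h3 : HasDerivAt (fun z : ℂ => f ((r:ℂ) * z)) (deriv f 0 * r) 0 := by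
        have h1' : HasDerivAt f (deriv f 0) ((fun z : ℂ => (r:ℂ) * z) 0) := by
          simpa using h1
        exact h1'.comp 0 h2
      have h4 : HasDerivAt g (deriv f 0 * r) 0 := h3.add_const _
      rw [h4.deriv]
      simp [ha, norm_mul, Complex.norm_real, abs_of_pos hrpos, mul_comm]
    have hmem : r * a ∈ etaSet (W n) q := ⟨g, hgd, hg0, hgm, hgderiv.symm⟩
    have hle : r * a ≤ eta' (W n) q := le_eta'' ((hWU n).trans hUM) hmem
    have hcq : |eta' W₀ q - t| < ε/4 := by
      have := hδ' hq2 hqp'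
      rwa [Real.dist_eq] at this
    have : eta' W₀ q < t + ε/4 := by
      cases' abs_lt.1 hcq with h1 h2; linarith
    linarith
  choose ρ hρpos N hN using key
  obtain ⟨s, hsK, hscov⟩ := hK.elim_nhds_subcover (fun p => ball p (if h : p ∈ K then ρ p h else 1))
    (fun p hp => by simp only [dif_pos hp]; exact ball_mem_nhds _ (hρpos p hp))
  set Nmax := s.sup fun p => if h : p ∈ K then N p h else 0 with hNmax
  filter_upwards [eventually_ge_atTop Nmax] with n hn
  intro q hq
  obtain ⟨p, hps, hqp⟩ := mem_iUnion₂.1 (hscov hq)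
  have hpK : p ∈ K := hsK p hps
  simp only [dif_pos hpK] at hqp
  have hNle : N p hpK ≤ Nmax := by
    have h := Finset.le_sup (f := fun p => if h : p ∈ K then N p h else 0) hps
    simp only [dif_pos hpK] at h
    exact h
  exact hN p hpK n (le_trans hNle hn) q ⟨hqp, hKW hq⟩

/-- Interior Lipschitz estimate for bounded holomorphic functions on the unit disc. -/
lemma lipschitz_of_bounded_holo {M : ℝ} {h : ℂ → ℂ}
    (hd : DifferentiableOn ℂ h (ball (0:ℂ) 1))
    (hb : ∀ z ∈ ball (0:ℂ) 1, h z ∈ ball (0:ℂ) M) {r' : ℝ} (hr' : r' < 1)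
    {z w : ℂ} (hz : z ∈ closedBall (0:ℂ) r') (hw : w ∈ closedBall (0:ℂ) r') :
    ‖h z - h w‖ ≤ (2 * M / (1 - r')) * ‖z - w‖ := by
  have hsub : closedBall (0:ℂ) r' ⊆ ball (0:ℂ) 1 := closedBall_subset_ball hr'
  have hball : ∀ x ∈ closedBall (0:ℂ) r', ball x (1 - r') ⊆ ball (0:ℂ) 1 := by
    intro x hx y hy
    rw [mem_ball, dist_zero_right]
    have hyx : ‖y‖ ≤ ‖y - x‖ + ‖x‖ := by simpa using norm_add_le (y - x) x
    calc ‖y‖ ≤ ‖y - x‖ + ‖x‖ := hyx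
    _ < (1 - r') + r' := by
        refine add_lt_add_of_lt_of_le ?_ (mem_closedBall_zero_iff.1 hx)
        rwa [mem_ball, dist_eq_norm] at hy
    _ = 1 := by ring
  have hderiv : ∀ x ∈ closedBall (0:ℂ) r', ‖deriv h x‖ ≤ 2 * M / (1 - r') := by
    intro x hx
    have hd' : DifferentiableOn ℂ h (ball x (1 - r')) := hd.mono (hball x hx)
    have hmt : MapsTo h (ball x (1 - r')) (ball (h x) (2 * M)) := by
      intro y hy
      have h1 := hb y (hball x hx hy)
      have h2 := hb x (hsub hx)
      rw [mem_ball] at h1 h2 ⊢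
      calc dist (h y) (h x) ≤ dist (h y) 0 + dist 0 (h x) := dist_triangle _ _ _
      _ < M + M := by rw [dist_comm (0:ℂ)]; exact add_lt_add h1 h2
      _ = 2 * M := by ring
    have := Complex.norm_deriv_le_div_of_mapsTo_ball hd' (hmt.mono_right ball_subset_closedBall) (by linarith)
    exact this
  have hconv : Convex ℝ (closedBall (0:ℂ) r') := convex_closedBall _ _
  exact hconv.norm_image_sub_le_of_norm_deriv_le
    (fun x hx => (hd.differentiableAt (isOpen_ball.mem_nhds (hsub hx)))) hderiv hw hz

/-- Montel's theorem for a uniformly bounded sequence of holomorphic functions on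
the unit disc: some subsequence converges locally uniformly. -/
lemma montel {M : ℝ} (hM : 0 < M) {g : ℕ → ℂ → ℂ}
    (hgd : ∀ j, DifferentiableOn ℂ (g j) (ball (0:ℂ) 1))
    (hgb : ∀ j, ∀ z ∈ ball (0:ℂ) 1, g j z ∈ ball (0:ℂ) M) :
    ∃ τ : ℕ → ℕ, StrictMono τ ∧ ∃ f : ℂ → ℂ,
      TendstoLocallyUniformlyOn (fun j => g (τ j)) f atTop (ball (0:ℂ) 1) := by
  classical
  obtain ⟨q, hq⟩ := TopologicalSpace.exists_dense_seq ℂ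
  -- the diagonal subsequence
  set x : ℕ → ℕ → ℂ := fun j i => if q i ∈ ball (0:ℂ) 1 then g j (q i) else 0 with hx
  have hxmem : ∀ j, x j ∈ Set.pi univ (fun _ : ℕ => closedBall (0:ℂ) M) := by
    intro j i _
    by_cases h : q i ∈ ball (0:ℂ) 1
    · simp only [hx, if_pos h]
      exact ball_subset_closedBall (hgb j _ h)
    · simp only [hx, if_neg h]
      exact mem_closedBall_self hM.le
  have hcomp : IsCompact (Set.pi univ (fun _ : ℕ => closedBall (0:ℂ) M)) :=
    isCompact_univ_pi fun _ => isCompact_closedBall _ _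
  obtain ⟨h, -, τ, hτ, hconv⟩ := hcomp.tendsto_subseq hxmem
  have hpt : ∀ i, Tendsto (fun j => x (τ j) i) atTop (𝓝 (h i)) := by
    intro i
    exact (tendsto_pi_nhds.1 hconv) i
  -- uniform Cauchy on closed balls
  have cauchy : ∀ r : ℝ, r < 1 → UniformCauchySeqOn (fun j => g (τ j)) atTop
      (closedBall (0:ℂ) r) := by
    intro r hr
    rcases lt_or_ge r 0 with hr0 | hr0
    · rw [closedBall_eq_empty.2 hr0]
      exact fun u hu => Filter.Eventually.of_forall (fun m z hz => absurd hz (Set.notMem_empty z))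
    set r' := (1 + r) / 2 with hr'def
    have hr'lt : r' < 1 := by rw [hr'def]; linarith
    have hrr' : r < r' := by rw [hr'def]; linarith
    set L := 2 * M / (1 - r') with hL
    have hL0 : 0 ≤ L := by
      apply div_nonneg (by linarith) (by linarith)
    rw [Metric.uniformCauchySeqOn_iff]
    intro ε hε
    set δ := min ((r' - r)/2) (ε/(4*(L+1))) with hδdef
    have hδpos : 0 < δ := by
      apply lt_min (by linarith)
      positivity
    -- a finite cover of the closed ball by δ-balls centered at good points of the seq q
    set Uc : ℕ → Set ℂ := fun i => if q i ∈ closedBall (0:ℂ) r' then ball (q i) δ else ∅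
      with hUc
    have hcover : closedBall (0:ℂ) r ⊆ ⋃ i, Uc i := by
      intro z hz
      obtain ⟨i, hi⟩ := hq.exists_dist_lt z hδpos
      have hqi : q i ∈ closedBall (0:ℂ) r' := by
        rw [mem_closedBall, dist_zero_right]
        have hyx : ‖q i‖ ≤ ‖q i - z‖ + ‖z‖ := by simpa using norm_add_le (q i - z) z
        calc ‖q i‖ ≤ ‖q i - z‖ + ‖z‖ := hyx
        _ ≤ δ + r := by
            refine add_le_add ?_ (mem_closedBall_zero_iff.1 hz)
            rw [← dist_eq_norm, dist_comm]
            exact hi.le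
        _ ≤ (r' - r)/2 + r := by
            have h2 : δ ≤ (r' - r)/2 := min_le_left _ _
            linarith
        _ ≤ r' := by linarith
      refine mem_iUnion.2 ⟨i, ?_⟩
      rw [hUc]
      simp only [if_pos hqi]
      rw [mem_ball]
      exact hi
    obtain ⟨T, hT⟩ := (isCompact_closedBall (0:ℂ) r).elim_finite_subcover Uc
      (fun i => by rw [hUc]; dsimp only; split <;> simp [isOpen_ball]) hcover
    -- choose N using the finitely many pointwise Cauchy sequences
    have hcs : ∀ i : ℕ, CauchySeq (fun j => x (τ j) i) := fun i => (hpt i).cauchySeq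
    have hNex : ∀ i : ℕ, ∃ N, ∀ m ≥ N, ∀ n ≥ N,
        dist (x (τ m) i) (x (τ n) i) < ε/4 := by
      intro i
      exact Metric.cauchySeq_iff.1 (hcs i) (ε/4) (by linarith)
    choose Nf hNf using hNex
    refine ⟨T.sup Nf, fun m hm n hn z hz => ?_⟩
    obtain ⟨i, hiT, hiz⟩ := mem_iUnion₂.1 (hT hz)
    have hqi : q i ∈ closedBall (0:ℂ) r' := by
      by_contra hcon
      rw [hUc] at hiz; simp only [if_neg hcon] at hiz; exact hiz
    rw [hUc] at hiz; simp only [if_pos hqi] at hiz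
    have hqi1 : q i ∈ ball (0:ℂ) 1 := closedBall_subset_ball hr'lt hqi
    have hxg : ∀ j, x (τ j) i = g (τ j) (q i) := fun j => by
      rw [hx]; simp only [if_pos hqi1]
    have hiN : Nf i ≤ T.sup Nf := Finset.le_sup hiT
    have hmid : dist (g (τ m) (q i)) (g (τ n) (q i)) < ε/4 := by
      rw [← hxg, ← hxg]
      exact hNf i m (le_trans hiN hm) n (le_trans hiN hn)
    have hz' : z ∈ closedBall (0:ℂ) r' := closedBall_subset_closedBall hrr'.le hz
    have hδL : ∀ j, ‖g (τ j) z - g (τ j) (q i)‖ ≤ ε/4 := by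
      intro j
      calc ‖g (τ j) z - g (τ j) (q i)‖ ≤ L * ‖z - q i‖ :=
            lipschitz_of_bounded_holo (hgd (τ j)) (hgb (τ j)) hr'lt hz' hqi
      _ ≤ L * δ := by
          refine mul_le_mul_of_nonneg_left ?_ hL0
          rw [← dist_eq_norm]
          exact hiz.le
      _ ≤ L * (ε/(4*(L+1))) := by
          refine mul_le_mul_of_nonneg_left (min_le_right _ _) hL0
      _ ≤ ε/4 := by
          rw [mul_div_assoc', div_le_div_iff₀ (by positivity) (by norm_num : (0:ℝ) < 4)]
          nlinarith [hε.le, hL0]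
    calc dist (g (τ m) z) (g (τ n) z)
        ≤ dist (g (τ m) z) (g (τ m) (q i)) + dist (g (τ m) (q i)) (g (τ n) z) :=
          dist_triangle _ _ _
    _ ≤ dist (g (τ m) z) (g (τ m) (q i)) + (dist (g (τ m) (q i)) (g (τ n) (q i))
          + dist (g (τ n) (q i)) (g (τ n) z)) := by
          gcongr
          exact dist_triangle _ _ _
    _ < ε/4 + (ε/4 + ε/4) := by
        refine add_lt_add_of_le_of_lt ?_ (add_lt_add_of_lt_of_le hmid ?_)
        · rw [dist_eq_norm]; exact hδL m
        · rw [dist_comm, dist_eq_norm]; exact hδL n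
    _ < ε := by linarith
  -- pointwise limit
  have hptlim : ∀ z ∈ ball (0:ℂ) 1, CauchySeq (fun j => g (τ j) z) := by
    intro z hz
    have hz1 : ‖z‖ < 1 := mem_ball_zero_iff.1 hz
    have := cauchy ‖z‖ hz1
    rw [Metric.uniformCauchySeqOn_iff] at this
    rw [Metric.cauchySeq_iff]
    intro ε hε
    obtain ⟨N, hN⟩ := this ε hε
    exact ⟨N, fun m hm n hn => hN m hm n hn z (mem_closedBall_zero_iff.2 le_rfl)⟩
  set f : ℂ → ℂ := fun z => limUnder atTop (fun j => g (τ j) z) with hf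
  have htendpt : ∀ z ∈ ball (0:ℂ) 1, Tendsto (fun j => g (τ j) z) atTop (𝓝 (f z)) :=
    fun z hz => (hptlim z hz).tendsto_limUnder
  refine ⟨τ, hτ, f, ?_⟩
  rw [tendstoLocallyUniformlyOn_iff_forall_isCompact isOpen_ball]
  intro K hKsub hK
  rcases K.eq_empty_or_nonempty with rfl | hKne
  · exact tendstoUniformlyOn_empty
  obtain ⟨z₀, hz₀K, hz₀max⟩ := hK.exists_isMaxOn hKne continuous_norm.continuousOn
  have hr1 : ‖z₀‖ < 1 := mem_ball_zero_iff.1 (hKsub hz₀K)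
  have hKsub' : K ⊆ closedBall (0:ℂ) ‖z₀‖ := by
    intro z hz
    rw [mem_closedBall, dist_zero_right]
    exact hz₀max hz
  exact ((cauchy ‖z₀‖ hr1).tendstoUniformlyOn_of_tendsto
    (fun z hz => htendpt z (closedBall_subset_ball hr1 hz))).mono hKsub'

lemma hurwitz_ball {g : ℕ → ℂ → ℂ} {f : ℂ → ℂ}
    (hgd : ∀ j, DifferentiableOn ℂ (g j) (ball (0:ℂ) 1))
    (hf : TendstoLocallyUniformlyOn g f atTop (ball (0:ℂ) 1))
    (hfd : DifferentiableOn ℂ f (ball (0:ℂ) 1))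
    (hnc : deriv f 0 ≠ 0)
    {z₀ : ℂ} (hz₀ : z₀ ∈ ball (0:ℂ) 1) :
    ∃ ε > 0, ∀ᶠ j in atTop, ball (f z₀) ε ⊆ g j '' (ball (0:ℂ) 1) := by
  set w := f z₀ with hw
  have han : AnalyticOnNhd ℂ (fun z => f z - w) (ball (0:ℂ) 1) :=
    ((hfd.analyticOnNhd isOpen_ball).sub analyticOnNhd_const)
  have hnotconst : ¬ (∀ᶠ z in 𝓝 z₀, f z - w = 0) := by
    intro hcon
    have hEq : EqOn (fun z => f z - w) 0 (ball (0:ℂ) 1) :=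
      han.eqOn_zero_of_preconnected_of_eventuallyEq_zero
        (convex_ball _ _).isPreconnected hz₀ hcon
    have hfz : EqOn f (fun _ => w) (ball (0:ℂ) 1) := by
      intro z hz
      have h1 := hEq hz
      simpa [sub_eq_zero] using h1
    have hd0 : deriv f 0 = 0 := by
      have hev : f =ᶠ[𝓝 (0:ℂ)] (fun _ => w) :=
        eventuallyEq_iff_exists_mem.2 ⟨ball (0:ℂ) 1, isOpen_ball.mem_nhds (by simp), hfz⟩
      rw [hev.deriv_eq]; simp
    exact hnc hd0
  have hpunct : ∀ᶠ z in 𝓝[≠] z₀, f z - w ≠ 0 := by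
    rcases (han z₀ hz₀).eventually_eq_zero_or_eventually_ne_zero with h | h
    · exact absurd h hnotconst
    · exact h
  obtain ⟨ρ₀, hρ₀pos, hρ₀⟩ := Metric.mem_nhdsWithin_iff.1 hpunct
  -- choose the radius ρ
  have hz₀1 : ‖z₀‖ < 1 := mem_ball_zero_iff.1 hz₀
  set ρ := min (ρ₀/2) ((1 - ‖z₀‖)/2) with hρdef
  have hρpos : 0 < ρ := lt_min (by linarith) (by linarith)
  have hρρ₀ : ρ < ρ₀ := lt_of_le_of_lt (min_le_left _ _) (by linarith)
  have hcb_sub : closedBall z₀ ρ ⊆ ball (0:ℂ) 1 := by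
    intro z hz
    rw [mem_ball, dist_zero_right]
    have h1 : dist z z₀ ≤ ρ := mem_closedBall.1 hz
    have h2 : ρ ≤ (1 - ‖z₀‖)/2 := min_le_right _ _
    calc ‖z‖ ≤ ‖z - z₀‖ + ‖z₀‖ := by simpa using norm_add_le (z - z₀) z₀
    _ ≤ (1 - ‖z₀‖)/2 + ‖z₀‖ := by
        rw [← dist_eq_norm]; exact add_le_add (h1.trans h2) le_rfl
    _ < 1 := by linarith
  have hsphere_ne : ∀ z ∈ sphere z₀ ρ, f z - w ≠ 0 := by
    intro z hz
    apply hρ₀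
    constructor
    · rw [mem_ball]
      rw [mem_sphere] at hz
      rw [hz]; exact hρρ₀
    · intro hzz
      rw [mem_singleton_iff] at hzz
      rw [mem_sphere, hzz, dist_self] at hz
      exact absurd hz.symm hρpos.ne'
  -- the minimum on the sphere
  have hsphne : (sphere z₀ ρ).Nonempty := NormedSpace.sphere_nonempty.2 hρpos.le
  have hsphsub : sphere z₀ ρ ⊆ ball (0:ℂ) 1 := fun z hz => hcb_sub (sphere_subset_closedBall hz)
  have hcont : ContinuousOn (fun z => ‖f z - w‖) (sphere z₀ ρ) :=
    ((hfd.continuousOn.mono hsphsub).sub continuousOn_const).norm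
  obtain ⟨zm, hzm, hzmmin⟩ := (isCompact_sphere z₀ ρ).exists_isMinOn hsphne hcont
  set m := ‖f zm - w‖ with hm
  have hmpos : 0 < m := norm_pos_iff.2 (hsphere_ne zm hzm)
  refine ⟨m/4, by linarith, ?_⟩
  -- eventually the g j are m/4-close to f on the closed ball
  have htu : TendstoUniformlyOn g f atTop (closedBall z₀ ρ) :=
    (tendstoLocallyUniformlyOn_iff_forall_isCompact isOpen_ball).1 hf _ hcb_sub
      (isCompact_closedBall _ _)
  have hev : ∀ᶠ j in atTop, ∀ z ∈ closedBall z₀ ρ, dist (f z) (g j z) < m/4 :=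
    Metric.tendstoUniformlyOn_iff.1 htu (m/4) (by linarith)
  filter_upwards [hev] with j hj
  intro w' hw'
  rw [mem_ball] at hw'
  by_contra hcon
  have hne : ∀ z ∈ ball (0:ℂ) 1, g j z ≠ w' := by
    intro z hz hzz
    exact hcon ⟨z, hz, hzz⟩
  -- the reciprocal function
  set h : ℂ → ℂ := fun z => (g j z - w')⁻¹ with hh
  have hVd : DifferentiableOn ℂ h (ball (0:ℂ) 1) := by
    apply DifferentiableOn.inv ((hgd j).sub (differentiableOn_const _))
    intro z hz
    exact sub_ne_zero.2 (hne z hz)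
  have hdcc : DiffContOnCl ℂ h (ball z₀ ρ) := by
    constructor
    · exact hVd.mono (fun z hz => hcb_sub (ball_subset_closedBall hz))
    · rw [closure_ball z₀ hρpos.ne']
      exact (hVd.continuousOn).mono hcb_sub
  have hfrontier : ∀ z ∈ frontier (ball z₀ ρ), ‖h z‖ ≤ 2/m := by
    intro z hz
    rw [frontier_ball z₀ hρpos.ne'] at hz
    have h1 : m ≤ ‖f z - w‖ := hzmmin hz
    have h2 : dist (f z) (g j z) < m/4 := hj z (sphere_subset_closedBall hz)
    have h3 : m/2 ≤ ‖g j z - w'‖ := by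
      have hc : ‖f z - w‖ ≤ ‖f z - g j z‖ + ‖g j z - w'‖ + ‖w' - w‖ := by
        have : f z - w = (f z - g j z) + (g j z - w') + (w' - w) := by ring
        rw [this]
        exact (norm_add_le _ _).trans (by gcongr; exact norm_add_le _ _)
      rw [dist_eq_norm] at h2 hw'
      have hw'w : ‖w' - w‖ < m/4 := hw'
      linarith
    have h5 : ‖g j z - w'‖⁻¹ ≤ (m/2)⁻¹ := by
      apply inv_anti₀ (by linarith) h3
    rw [hh]
    simp only [norm_inv]
    calc ‖g j z - w'‖⁻¹ ≤ (m/2)⁻¹ := h5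
    _ = 2/m := by rw [inv_div]
  have hmax := Complex.norm_le_of_forall_mem_frontier_norm_le isBounded_ball hdcc hfrontier
    (subset_closure (mem_ball_self hρpos))
  have hz₀ne : g j z₀ - w' ≠ 0 := sub_ne_zero.2 (hne z₀ hz₀)
  have hlb : m/2 ≤ ‖g j z₀ - w'‖ := by
    by_contra hlt
    push_neg at hlt
    have h4 : 0 < ‖g j z₀ - w'‖ := norm_pos_iff.2 hz₀ne
    have h5 : (m/2)⁻¹ < ‖g j z₀ - w'‖⁻¹ := by
      apply inv_strictAnti₀ h4 hlt
    have h6 : ‖h z₀‖ = ‖g j z₀ - w'‖⁻¹ := by rw [hh]; simp [norm_inv]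
    rw [h6] at hmax
    rw [inv_div] at h5
    linarith
  have hub : ‖g j z₀ - w'‖ < m/2 := by
    have h7 : dist (f z₀) (g j z₀) < m/4 := hj z₀ (mem_closedBall_self hρpos.le)
    have h8 : g j z₀ - w' = (g j z₀ - f z₀) + (w - w') := by rw [← hw]; ring
    calc ‖g j z₀ - w'‖ ≤ ‖g j z₀ - f z₀‖ + ‖w - w'‖ := by rw [h8]; exact norm_add_le _ _
    _ < m/4 + m/4 := by
        refine add_lt_add ?_ ?_
        · rw [← dist_eq_norm, dist_comm]; exact h7
        · rw [← dist_eq_norm, dist_comm]; exact hw'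
    _ = m/2 := by ring
  linarith

lemma eta_upper_bound
    {U : Set ℂ} {M : ℝ} (hM : 0 < M) (hUM : U ⊆ ball (0:ℂ) M)
    {W : ℕ → Set ℂ} {W₀ : Set ℂ}
    (hWopen : ∀ n, IsOpen (W n)) (hW₀open : IsOpen W₀)
    (hWU : ∀ n, W n ⊆ U) (hW₀U : W₀ ⊆ U)
    (hsub : ∀ σ : ℕ → ℕ, StrictMono σ → seqKernel (fun k => W (σ k)) = W₀)
    (hcont : ContinuousOn (eta' W₀) W₀)
    {K : Set ℂ} (hK : IsCompact K) (hKW : K ⊆ W₀) {ε : ℝ} (hε : 0 < ε) :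
    ∀ᶠ n in atTop, ∀ p ∈ K, eta' (W n) p < eta' W₀ p + ε := by
  classical
  by_contra hcon
  rw [Filter.not_eventually] at hcon
  have hfreq : ∃ᶠ n in atTop, ∃ p ∈ K, eta' W₀ p + ε ≤ eta' (W n) p := by
    refine hcon.mono fun n hn => ?_
    push_neg at hn
    obtain ⟨p, hp, hge⟩ := hn
    exact ⟨p, hp, hge⟩
  obtain ⟨φ, hφ, hφP⟩ := Filter.extraction_of_frequently_atTop hfreq
  choose q hqK hqge using hφP
  -- extract a convergent subsequence of the points
  obtain ⟨p, hpK, ψ, hψ, hconvp⟩ := hK.tendsto_subseq hqK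
  set σ : ℕ → ℕ := φ ∘ ψ with hσ
  have hσmono : StrictMono σ := hφ.comp hψ
  set q' : ℕ → ℂ := q ∘ ψ with hq'
  have hq'K : ∀ j, q' j ∈ K := fun j => hqK (ψ j)
  have hq'ge : ∀ j, eta' W₀ (q' j) + ε ≤ eta' (W (σ j)) (q' j) := fun j => hqge (ψ j)
  -- choose near-extremal maps
  have hfex : ∀ j, ∃ f : ℂ → ℂ, DifferentiableOn ℂ f (ball (0:ℂ) 1) ∧ f 0 = q' j ∧
      (∀ z ∈ ball (0:ℂ) 1, f z ∈ W (σ j)) ∧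
      eta' W₀ (q' j) + ε/2 ≤ ‖deriv f 0‖ := by
    intro j
    have h0 : 0 ≤ eta' W₀ (q' j) := eta'_nonneg _ _
    have hpos : 0 < eta' (W (σ j)) (q' j) := lt_of_lt_of_le (by linarith) (hq'ge j)
    have hne : (etaSet (W (σ j)) (q' j)).Nonempty := by
      by_contra hemp
      rw [Set.not_nonempty_iff_eq_empty] at hemp
      have : eta' (W (σ j)) (q' j) = 0 := by
        rw [eta', hemp, Real.sSup_empty]
      linarith
    obtain ⟨r, hrmem, hrgt⟩ := exists_lt_of_lt_csSup hne
      (sub_lt_self (eta' (W (σ j)) (q' j)) (by linarith : (0:ℝ) < ε/2))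
    obtain ⟨f, hfd, hf0, hfm, hrf⟩ := hrmem
    refine ⟨f, hfd, hf0, hfm, ?_⟩
    rw [← hrf]
    have := hq'ge j
    linarith
  choose f hfd hf0 hfm hfder using hfex
  -- Montel
  have hfb : ∀ j, ∀ z ∈ ball (0:ℂ) 1, f j z ∈ ball (0:ℂ) M :=
    fun j z hz => hUM (hWU _ (hfm j z hz))
  obtain ⟨τ, hτ, F, hTLU⟩ := montel hM hfd hfb
  set σ' : ℕ → ℕ := σ ∘ τ with hσ'
  have hσ'mono : StrictMono σ' := hσmono.comp hτ
  have hFd : DifferentiableOn ℂ F (ball (0:ℂ) 1) :=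
    hTLU.differentiableOn (Eventually.of_forall fun j => hfd (τ j)) isOpen_ball
  -- F 0 = p
  have h0mem : (0:ℂ) ∈ ball (0:ℂ) 1 := by simp
  have hF0 : F 0 = p := by
    have h1 : Tendsto (fun j => f (τ j) 0) atTop (𝓝 (F 0)) := hTLU.tendsto_at h0mem
    have h2 : Tendsto (fun j => f (τ j) 0) atTop (𝓝 p) := by
      have : (fun j => f (τ j) 0) = fun j => q' (τ j) := by
        funext j; exact hf0 (τ j)
      rw [this]
      exact hconvp.comp hτ.tendsto_atTop
    exact tendsto_nhds_unique h1 h2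
  -- derivative bound for F
  have hpW₀ : p ∈ W₀ := hKW hpK
  have hq'W₀ : ∀ j, q' j ∈ W₀ := fun j => hKW (hq'K j)
  have hetatend : Tendsto (fun j => eta' W₀ (q' (τ j))) atTop (𝓝 (eta' W₀ p)) := by
    have h1 : Tendsto (fun j => q' (τ j)) atTop (𝓝[W₀] p) := by
      rw [tendsto_nhdsWithin_iff]
      exact ⟨hconvp.comp hτ.tendsto_atTop, Eventually.of_forall fun j => hq'W₀ (τ j)⟩
    exact (hcont p hpW₀).tendsto.comp h1
  have hderivtend : Tendsto (fun j => ‖deriv (f (τ j)) 0‖) atTop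
      (𝓝 (‖deriv F 0‖)) := by
    have h1 := (hTLU.deriv (Eventually.of_forall fun j => hfd (τ j)) isOpen_ball).tendsto_at h0mem
    exact (continuous_norm.tendsto _).comp h1
  have hFder : eta' W₀ p + ε/2 ≤ ‖deriv F 0‖ := by
    refine le_of_tendsto_of_tendsto' (hetatend.add tendsto_const_nhds) hderivtend fun j => ?_
    exact hfder (τ j)
  have hFne : deriv F 0 ≠ 0 := by
    intro h
    rw [h] at hFder
    simp at hFder
    have := eta'_nonneg W₀ p
    linarith
  -- the image of F is contained in W₀
  have himg : ∀ s : ℝ, 0 ≤ s → s < 1 → F '' closedBall (0:ℂ) s ⊆ W₀ := by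
    intro s hs0 hs1
    have hcbsub : closedBall (0:ℂ) s ⊆ ball (0:ℂ) 1 := closedBall_subset_ball hs1
    set C : Set ℂ := F '' closedBall (0:ℂ) s with hC
    have hCcomp : IsCompact C :=
      (isCompact_closedBall _ _).image_of_continuousOn (hFd.continuousOn.mono hcbsub)
    have hCconn : IsPreconnected C := by
      have h1 : IsConnected (closedBall (0:ℂ) s) :=
        ⟨⟨0, mem_closedBall_self hs0⟩, (convex_closedBall _ _).isPreconnected⟩
      exact (h1.image F (hFd.continuousOn.mono hcbsub)).isPreconnected
    have hpC : p ∈ C := ⟨0, mem_closedBall_self hs0, hF0⟩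
    -- each point of C has a ball eventually inside all the W (σ' k)
    have hloc : ∀ w ∈ C, ∃ δ > 0, ∃ J : ℕ, ∀ k ≥ J, ball w δ ⊆ W (σ' k) := by
      rintro w ⟨z₀, hz₀, rfl⟩
      obtain ⟨δ, hδpos, hev⟩ := hurwitz_ball (fun j => hfd (τ j)) hTLU hFd hFne (hcbsub hz₀)
      obtain ⟨J, hJ⟩ := eventually_atTop.1 hev
      refine ⟨δ, hδpos, J, fun k hk => (hJ k hk).trans ?_⟩
      rintro _ ⟨z, hz, rfl⟩
      exact hfm (τ k) z hz
    choose δ hδpos J hJ using hloc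
    -- a finite subcover gives a single index J₀
    obtain ⟨T, hTC, hTcov⟩ := hCcomp.elim_nhds_subcover
      (fun w => ball w (if h : w ∈ C then δ w h else 1))
      (fun w hw => by simp only [dif_pos hw]; exact ball_mem_nhds _ (hδpos w hw))
    set J₀ := T.sup (fun w => if h : w ∈ C then J w h else 0) with hJ₀
    set W' : ℕ → Set ℂ := fun k => W (σ' k) with hW'
    have hCint : C ⊆ interior (⋂ k, ⋂ (_ : J₀ ≤ k), W' k) := by
      intro x hx
      obtain ⟨w, hwT, hxw⟩ := mem_iUnion₂.1 (hTcov hx)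
      have hwC : w ∈ C := hTC w hwT
      simp only [dif_pos hwC] at hxw
      have hsub2 : ball w (δ w hwC) ⊆ ⋂ k, ⋂ (_ : J₀ ≤ k), W' k := by
        intro y hy
        refine mem_iInter₂.2 fun k hk => ?_
        have hJw : J w hwC ≤ J₀ := by
          have h := Finset.le_sup (f := fun w => if h : w ∈ C then J w h else 0) hwT
          simp only [dif_pos hwC] at h
          exact h
        exact hJ w hwC k (le_trans hJw hk) hy
      exact mem_interior.2 ⟨ball w (δ w hwC), hsub2, isOpen_ball, hxw⟩
    -- use the kernel hypothesis for the subsequence σ'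
    have hker' : seqKernel W' = W₀ := hsub σ' hσ'mono
    have hpker : p ∈ seqKernel W' := by rw [hker']; exact hpW₀
    obtain ⟨J₁, hpJ₁⟩ : ∃ J₁, p ∈ kerV W' J₁ := mem_iUnion.1 hpker
    set J₂ := max J₀ J₁ with hJ₂
    have hCint₂ : C ⊆ interior (⋂ k, ⋂ (_ : J₂ ≤ k), W' k) := by
      refine hCint.trans (interior_mono ?_)
      intro y hy
      exact mem_iInter₂.2 fun k hk => mem_iInter₂.1 hy k (le_trans (le_max_left _ _) hk)
    have hpJ₂ : p ∈ kerV W' J₂ := kerV_mono W' (le_max_right _ _) hpJ₁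
    have h0int : (0:ℂ) ∈ interior (⋂ k, ⋂ (_ : J₂ ≤ k), W' k) :=
      connectedComponentIn_nonempty_iff.1 ⟨p, hpJ₂⟩
    have hS : IsPreconnected (C ∪ kerV W' J₂) :=
      IsPreconnected.union p hpC hpJ₂ hCconn (kerV_isPreconnected W' J₂)
    have hS0 : (0:ℂ) ∈ C ∪ kerV W' J₂ := Or.inr (mem_connectedComponentIn h0int)
    have hSsub : C ∪ kerV W' J₂ ⊆ interior (⋂ k, ⋂ (_ : J₂ ≤ k), W' k) :=
      union_subset hCint₂ (connectedComponentIn_subset _ _)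
    have hSker : C ∪ kerV W' J₂ ⊆ kerV W' J₂ :=
      hS.subset_connectedComponentIn hS0 hSsub
    have hCW₀ : C ⊆ W₀ := by
      rw [← hker']
      exact (subset_union_left.trans hSker).trans (subset_iUnion (kerV W') J₂)
    exact hCW₀
  -- F is admissible for W₀ at p, contradiction
  have hFmaps : ∀ z ∈ ball (0:ℂ) 1, F z ∈ W₀ := by
    intro z hz
    exact himg ‖z‖ (norm_nonneg z) (mem_ball_zero_iff.1 hz)
      ⟨z, mem_closedBall_zero_iff.2 le_rfl, rfl⟩
  have hFadm : ‖deriv F 0‖ ∈ etaSet W₀ p := ⟨F, hFd, hF0, hFmaps, rfl⟩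
  have hle : ‖deriv F 0‖ ≤ eta' W₀ p := le_eta'' (hW₀U.trans hUM) hFadm
  linarith

/-- Theorem 1.6 for the trivial single-leaf foliation of a bounded plane domain
`U`: if `(W n)` converges to `W₀` in the kernel sense, `F = ∅`,
and `η_{W₀}` is continuous on `W₀`, then `η_{W n} → η_{W₀}` uniformly on every
compact subset of `W₀`. -/
theorem eta_uniform_convergence_of_kernel_convergence
    (U : Set ℂ) (hUopen : IsOpen U) (hUconn : IsConnected U)
    (hUbdd : Bornology.IsBounded U)
    (W : ℕ → Set ℂ) (W₀ : Set ℂ)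
    (hWopen : ∀ n, IsOpen (W n)) (hWconn : ∀ n, IsConnected (W n))
    (hWU : ∀ n, W n ⊆ U) (h0 : ∀ n, (0 : ℂ) ∈ W n)
    (hW₀open : IsOpen W₀) (hW₀conn : IsConnected W₀) (hW₀U : W₀ ⊆ U)
    (h0W₀ : (0 : ℂ) ∈ W₀)
    (hker : seqKernel W = W₀)
    (hsub : ∀ σ : ℕ → ℕ, StrictMono σ → seqKernel (fun k => W (σ k)) = W₀)
    (hF : Fset W W₀ = ∅)
    (hcont : ContinuousOn (eta W₀) W₀) :
    ∀ K : Set ℂ, IsCompact K → K ⊆ W₀ →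
      TendstoUniformlyOn (fun n p => eta (W n) p) (fun p => eta W₀ p) atTop K := by
  rw [← eta'_eq_eta] at hcont ⊢
  intro K hK hKW
  obtain ⟨M₀, hM₀⟩ := hUbdd.subset_ball (0 : ℂ)
  set M := max M₀ 1 with hM
  have hMpos : (0:ℝ) < M := lt_of_lt_of_le one_pos (le_max_right _ _)
  have hUM : U ⊆ ball (0:ℂ) M := hM₀.trans (ball_subset_ball (le_max_left _ _))
  rw [Metric.tendstoUniformlyOn_iff]
  intro ε hε
  have hlow := eta_lower_bound hUM hWopen hW₀open hWU hker hcont hK hKW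
    (half_pos hε)
  have hup := eta_upper_bound hMpos hUM hWopen hW₀open hWU hW₀U hsub hcont hK hKW
    (half_pos hε)
  filter_upwards [hlow, hup] with n hl hu p hp
  have h1 := hl p hp
  have h2 := hu p hp
  rw [Real.dist_eq, abs_lt]
  constructor <;> linarith
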